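/- Triangle-type inequality for the error decomposition: for any Θ₀ with SVD-induced subspaces (M, M̄) and any Δ, ‖Θ₀ + Δ‖_nu ≥ ‖Θ₀‖_nu + ‖P_{M̄⊥}Δ‖_nu − ‖P_{M̄}Δ‖_nu. -/

import Mathlib

open Matrix

/-- Nuclear norm (sum of singular values) of a real matrix. -/
noncomputable def nuclearNorm {m n : ℕ} (A : Matrix (Fin m) (Fin n) ℝ) : ℝ :=
  ∑ i, Real.sqrt ((Matrix.isHermitian_conjTranspose_mul_self A).eigenvalues i)

/-- Operator (spectral) norm of a real matrix. -/
noncomputable def opNorm {m n : ℕ} (A : Matrix (Fin m) (Fin n) ℝ) : ℝ :=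
  ‖LinearMap.toContinuousLinearMap (Matrix.toEuclideanLin A)‖

/-- Frobenius norm of a real matrix. -/
noncomputable def frobNorm {m n : ℕ} (A : Matrix (Fin m) (Fin n) ℝ) : ℝ :=
  Real.sqrt (∑ i, ∑ j, (A i j) ^ 2)

/-! ### Auxiliary lemmas for the nuclear norm -/

open scoped MatrixOrder in
/-- Square root of a positive semidefinite matrix (via the continuous functional calculus). -/
noncomputable def Matrix.PosSemidef.sqrt {n : ℕ} {A : Matrix (Fin n) (Fin n) ℝ}
    (_ : A.PosSemidef) : Matrix (Fin n) (Fin n) ℝ :=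
  CFC.sqrt A

open scoped MatrixOrder in
lemma Matrix.PosSemidef.posSemidef_sqrt {n : ℕ} {A : Matrix (Fin n) (Fin n) ℝ}
    (hA : A.PosSemidef) : hA.sqrt.PosSemidef :=
  Matrix.nonneg_iff_posSemidef.mp (CFC.sqrt_nonneg A)

open scoped MatrixOrder in
lemma Matrix.PosSemidef.sqrt_mul_self {n : ℕ} {A : Matrix (Fin n) (Fin n) ℝ}
    (hA : A.PosSemidef) : hA.sqrt * hA.sqrt = A :=
  CFC.sqrt_mul_sqrt_self A hA.nonneg

open scoped MatrixOrder in
lemma Matrix.PosSemidef.eq_sqrt_of_sq_eq {n : ℕ} {A B : Matrix (Fin n) (Fin n) ℝ}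
    (hB : B.PosSemidef) (hA : A.PosSemidef) (h : B ^ 2 = A) : B = hA.sqrt :=
  ((CFC.sqrt_eq_iff A B hA.nonneg hB.nonneg).mpr (by rw [← sq]; exact h)).symm

lemma herm_transpose_eq {n : ℕ} {M : Matrix (Fin n) (Fin n) ℝ} (h : M.IsHermitian) : Mᵀ = M := by
  rw [← conjTranspose_eq_transpose_of_trivial]; exact h.eq

lemma sum_sqrt_eig_congr {n : ℕ} {M N : Matrix (Fin n) (Fin n) ℝ}
    (hM : M.IsHermitian) (hN : N.IsHermitian) (h : M = N) :
    ∑ i, Real.sqrt (hM.eigenvalues i) = ∑ i, Real.sqrt (hN.eigenvalues i) := by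
  subst h; rfl

lemma nuclearNorm_congr {m m' n : ℕ} {A : Matrix (Fin m) (Fin n) ℝ}
    {B : Matrix (Fin m') (Fin n) ℝ} (h : Aᴴ * A = Bᴴ * B) :
    nuclearNorm A = nuclearNorm B :=
  sum_sqrt_eig_congr _ _ h

lemma nuclearNorm_neg {m n : ℕ} (A : Matrix (Fin m) (Fin n) ℝ) :
    nuclearNorm (-A) = nuclearNorm A :=
  nuclearNorm_congr (by simp)

open scoped MatrixOrder in
lemma nuclearNorm_eq_trace_sqrt {m n : ℕ} (A : Matrix (Fin m) (Fin n) ℝ) :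
    nuclearNorm A = (Matrix.posSemidef_conjTranspose_mul_self A).sqrt.trace := by
  rw [Matrix.PosSemidef.sqrt, CFC.sqrt_eq_cfc, cfc_nnreal_eq_real _ (Aᴴ * A)
    (Matrix.posSemidef_conjTranspose_mul_self A).nonneg,
    (Matrix.posSemidef_conjTranspose_mul_self A).1.cfc_eq, IsHermitian.cfc,
    Unitary.conjStarAlgAut_apply, Matrix.trace_mul_cycle, Unitary.coe_star_mul_self, one_mul,
    Matrix.trace_diagonal]
  unfold nuclearNorm
  apply Finset.sum_congr rfl
  intro i _
  simp [Real.coe_sqrt, Real.coe_toNNReal']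
  congr 1
  exact (max_eq_left ((Matrix.posSemidef_conjTranspose_mul_self A).eigenvalues_nonneg i)).symm

lemma trace_sqrt_congr {n : ℕ} {A B : Matrix (Fin n) (Fin n) ℝ}
    (hA : A.PosSemidef) (hB : B.PosSemidef) (h : A = B) : hA.sqrt = hB.sqrt := by
  subst h; rfl

/-! ### Square roots of orthogonal positive semidefinite matrices -/

lemma sqrt_mul_eq_zero {n : ℕ} {M N : Matrix (Fin n) (Fin n) ℝ}
    (hM : M.PosSemidef) (hN : N.PosSemidef) (h : M * N = 0) :
    hM.sqrt * N = 0 := by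
  have hNM : N * M = 0 := by
    have := congrArg conjTranspose h
    simpa [conjTranspose_mul, conjTranspose_eq_transpose_of_trivial, herm_transpose_eq hM.1,
      herm_transpose_eq hN.1] using this
  rw [← Matrix.conjTranspose_mul_self_eq_zero]
  calc (hM.sqrt * N)ᴴ * (hM.sqrt * N)
      = Nᴴ * (hM.sqrtᴴ * hM.sqrt) * N := by
        simp [conjTranspose_mul, Matrix.mul_assoc]
    _ = (N * M) * N := by rw [hM.posSemidef_sqrt.1.eq, hM.sqrt_mul_self, hN.1.eq, Matrix.mul_assoc]
    _ = 0 := by rw [hNM, Matrix.zero_mul]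

lemma sqrt_mul_sqrt_eq_zero {n : ℕ} {M N : Matrix (Fin n) (Fin n) ℝ}
    (hM : M.PosSemidef) (hN : N.PosSemidef) (h : M * N = 0) :
    hM.sqrt * hN.sqrt = 0 := by
  have hNM : N * M = 0 := by
    have := congrArg conjTranspose h
    simpa [conjTranspose_mul, conjTranspose_eq_transpose_of_trivial, herm_transpose_eq hM.1,
      herm_transpose_eq hN.1] using this
  have h1 : hN.sqrt * M = 0 := sqrt_mul_eq_zero hN hM hNM
  rw [← Matrix.conjTranspose_mul_self_eq_zero]
  calc (hM.sqrt * hN.sqrt)ᴴ * (hM.sqrt * hN.sqrt)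
      = hN.sqrtᴴ * (hM.sqrtᴴ * hM.sqrt) * hN.sqrt := by
        simp [conjTranspose_mul, Matrix.mul_assoc]
    _ = (hN.sqrt * M) * hN.sqrt := by
        rw [hM.posSemidef_sqrt.1.eq, hM.sqrt_mul_self, hN.posSemidef_sqrt.1.eq]
    _ = 0 := by rw [h1, Matrix.zero_mul]

lemma sqrt_add_of_mul_eq_zero {n : ℕ} {M N : Matrix (Fin n) (Fin n) ℝ}
    (hM : M.PosSemidef) (hN : N.PosSemidef) (h : M * N = 0)
    (hMN : (M + N).PosSemidef) :
    hMN.sqrt = hM.sqrt + hN.sqrt := by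
  have h1 : hM.sqrt * hN.sqrt = 0 := sqrt_mul_sqrt_eq_zero hM hN h
  have h2 : hN.sqrt * hM.sqrt = 0 := by
    have := congrArg conjTranspose h1
    simpa [conjTranspose_mul, conjTranspose_eq_transpose_of_trivial,
      herm_transpose_eq hM.posSemidef_sqrt.1, herm_transpose_eq hN.posSemidef_sqrt.1] using this
  refine ((hM.posSemidef_sqrt.add hN.posSemidef_sqrt).eq_sqrt_of_sq_eq hMN ?_).symm
  rw [pow_two, Matrix.add_mul, Matrix.mul_add, Matrix.mul_add, h1, h2,
    hM.sqrt_mul_self, hN.sqrt_mul_self]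
  simp

/-- Decomposability: if the ranges and co-ranges of `X` and `Y` are orthogonal, the nuclear
norm is additive. -/
lemma nuclearNorm_add_eq {m n : ℕ} {X Y : Matrix (Fin m) (Fin n) ℝ}
    (h1 : Xᴴ * Y = 0) (h2 : X * Yᴴ = 0) :
    nuclearNorm (X + Y) = nuclearNorm X + nuclearNorm Y := by
  have hM := Matrix.posSemidef_conjTranspose_mul_self X
  have hN := Matrix.posSemidef_conjTranspose_mul_self Y
  have hprod : (Xᴴ * X) * (Yᴴ * Y) = 0 := by
    calc Xᴴ * X * (Yᴴ * Y) = Xᴴ * ((X * Yᴴ) * Y) := by simp only [Matrix.mul_assoc]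
      _ = 0 := by rw [h2, Matrix.zero_mul, Matrix.mul_zero]
  have hYX : Yᴴ * X = 0 := by
    have := congrArg conjTranspose h1
    simpa [conjTranspose_mul] using this
  have hsum : (X + Y)ᴴ * (X + Y) = Xᴴ * X + Yᴴ * Y := by
    rw [conjTranspose_add, Matrix.add_mul, Matrix.mul_add, Matrix.mul_add, h1, hYX]
    simp
  have hMN : ((Xᴴ * X) + (Yᴴ * Y)).PosSemidef :=
    hsum ▸ Matrix.posSemidef_conjTranspose_mul_self (X + Y)
  have hc : (Matrix.posSemidef_conjTranspose_mul_self (X + Y)).sqrt = hMN.sqrt :=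
    trace_sqrt_congr _ _ hsum
  rw [nuclearNorm_eq_trace_sqrt, nuclearNorm_eq_trace_sqrt, nuclearNorm_eq_trace_sqrt, hc,
    sqrt_add_of_mul_eq_zero hM hN hprod hMN, Matrix.trace_add]

/-! ### Duality and the triangle inequality -/

lemma vecMul_conjTranspose_eq {m n : ℕ} (W : Matrix (Fin m) (Fin n) ℝ) (x : Fin n → ℝ) :
    x ᵥ* Wᴴ = W *ᵥ x := by
  simpa using (Matrix.star_mulVec W x).symm

lemma dot_mulVec_self {m n : ℕ} (W : Matrix (Fin m) (Fin n) ℝ) (x : Fin n → ℝ) :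
    (W *ᵥ x) ⬝ᵥ (W *ᵥ x) = x ⬝ᵥ ((Wᴴ * W) *ᵥ x) := by
  calc (W *ᵥ x) ⬝ᵥ (W *ᵥ x) = (x ᵥ* Wᴴ) ⬝ᵥ (W *ᵥ x) := by rw [vecMul_conjTranspose_eq]
    _ = x ⬝ᵥ (Wᴴ *ᵥ (W *ᵥ x)) := (Matrix.dotProduct_mulVec _ _ _).symm
    _ = x ⬝ᵥ ((Wᴴ * W) *ᵥ x) := by rw [Matrix.mulVec_mulVec]

/-- Duality: the trace pairing against a contraction is at most the nuclear norm. -/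
lemma trace_le_nuclearNorm {m n : ℕ} (A W : Matrix (Fin m) (Fin n) ℝ)
    (hW : ∀ x : Fin n → ℝ, (W *ᵥ x) ⬝ᵥ (W *ᵥ x) ≤ x ⬝ᵥ x) :
    (Wᴴ * A).trace ≤ nuclearNorm A := by
  set hA := Matrix.isHermitian_conjTranspose_mul_self A with hhA
  set U : Matrix (Fin n) (Fin n) ℝ := (hA.eigenvectorUnitary : Matrix (Fin n) (Fin n) ℝ) with hU
  have hsUU : star U * U = 1 := Unitary.coe_star_mul_self hA.eigenvectorUnitary
  have hUsU : U * star U = 1 := Unitary.coe_mul_star_self hA.eigenvectorUnitary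
  have hdiag : star U * (Aᴴ * A) * U = diagonal hA.eigenvalues := by
    have := hA.conjStarAlgAut_star_eigenvectorUnitary
    rwa [Unitary.conjStarAlgAut_star_apply, RCLike.ofReal_real_eq_id, Function.id_comp] at this
  set u : Fin n → Fin n → ℝ := fun i k => U k i with hu
  have hcolW : ∀ i, W *ᵥ u i = fun j => (W * U) j i := by
    intro i; ext j; simp [Matrix.mulVec, Matrix.mul_apply, dotProduct, hu]
  have hnormu : ∀ i, u i ⬝ᵥ u i = 1 := by
    intro i
    have : (star U * U) i i = (1 : Matrix (Fin n) (Fin n) ℝ) i i := by rw [hsUU]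
    simpa [Matrix.mul_apply, Matrix.one_apply, Matrix.star_eq_conjTranspose,
      Matrix.conjTranspose_apply, dotProduct, hu, mul_comm] using this
  have hcolA : ∀ i, ∑ j, (A * U) j i * (A * U) j i = hA.eigenvalues i := by
    intro i
    have h1 : ((A * U)ᴴ * (A * U)) i i = diagonal hA.eigenvalues i i := by
      rw [Matrix.conjTranspose_mul, Matrix.mul_assoc, ← Matrix.mul_assoc (Aᴴ),
        ← Matrix.mul_assoc, ← Matrix.star_eq_conjTranspose U, hdiag]
    simpa [Matrix.mul_apply, Matrix.conjTranspose_apply, Matrix.diagonal_apply_eq,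
      mul_comm] using h1
  have htr : (Wᴴ * A).trace = ∑ i, ∑ j, (W * U) j i * (A * U) j i := by
    have h0 : (Wᴴ * A).trace = (star U * (Wᴴ * A) * U).trace := by
      rw [Matrix.trace_mul_cycle, ← Matrix.mul_assoc, hUsU, Matrix.one_mul]
    have h1 : star U * (Wᴴ * A) * U = (W * U)ᴴ * (A * U) := by
      rw [Matrix.conjTranspose_mul, Matrix.star_eq_conjTranspose]
      simp only [Matrix.mul_assoc]
    rw [h0, h1]
    simp [Matrix.trace, Matrix.diag, Matrix.mul_apply, Matrix.conjTranspose_apply, mul_comm]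
  rw [htr]
  have hle : ∀ i, ∑ j, (W * U) j i * (A * U) j i ≤ Real.sqrt (hA.eigenvalues i) := by
    intro i
    calc ∑ j, (W * U) j i * (A * U) j i
        ≤ Real.sqrt (∑ j, (W * U) j i ^ 2) * Real.sqrt (∑ j, (A * U) j i ^ 2) :=
          Real.sum_mul_le_sqrt_mul_sqrt _ _ _
      _ ≤ 1 * Real.sqrt (hA.eigenvalues i) := by
          apply mul_le_mul
          · rw [show (1:ℝ) = Real.sqrt 1 by simp]
            apply Real.sqrt_le_sqrt
            have := hW (u i)
            rw [hcolW i] at this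
            calc ∑ j, (W * U) j i ^ 2 = (fun j => (W * U) j i) ⬝ᵥ (fun j => (W * U) j i) := by
                  simp [dotProduct, sq]
              _ ≤ u i ⬝ᵥ u i := this
              _ = 1 := hnormu i
          · apply le_of_eq
            congr 1
            rw [← hcolA i]
            apply Finset.sum_congr rfl; intro j _; ring
          · positivity
          · norm_num
      _ = Real.sqrt (hA.eigenvalues i) := one_mul _
  calc ∑ i, ∑ j, (W * U) j i * (A * U) j i ≤ ∑ i, Real.sqrt (hA.eigenvalues i) :=
        Finset.sum_le_sum fun i _ => hle i
    _ = nuclearNorm A := rfl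

/-- The dual witness achieving the nuclear norm in the trace pairing. -/
noncomputable def nnWitness {m n : ℕ} (C : Matrix (Fin m) (Fin n) ℝ) : Matrix (Fin m) (Fin n) ℝ :=
  letI hC := Matrix.isHermitian_conjTranspose_mul_self C
  letI U : Matrix (Fin n) (Fin n) ℝ := hC.eigenvectorUnitary
  C * (U * diagonal (fun i => if hC.eigenvalues i = 0 then 0
      else (Real.sqrt (hC.eigenvalues i))⁻¹) * star U)

lemma nnWitness_spec {m n : ℕ} (C : Matrix (Fin m) (Fin n) ℝ) :
    ((nnWitness C)ᴴ * C).trace = nuclearNorm C ∧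
    (∀ x : Fin n → ℝ, (nnWitness C *ᵥ x) ⬝ᵥ (nnWitness C *ᵥ x) ≤ x ⬝ᵥ x) := by
  set hC := Matrix.isHermitian_conjTranspose_mul_self C with hhC
  set U : Matrix (Fin n) (Fin n) ℝ := (hC.eigenvectorUnitary : Matrix (Fin n) (Fin n) ℝ) with hU
  have hsUU : star U * U = 1 := Unitary.coe_star_mul_self hC.eigenvectorUnitary
  have hUsU : U * star U = 1 := Unitary.coe_mul_star_self hC.eigenvectorUnitary
  have hdiag : star U * (Cᴴ * C) * U = diagonal hC.eigenvalues := by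
    have := hC.conjStarAlgAut_star_eigenvectorUnitary
    rwa [Unitary.conjStarAlgAut_star_apply, RCLike.ofReal_real_eq_id, Function.id_comp] at this
  have hnonneg : ∀ i, 0 ≤ hC.eigenvalues i :=
    (Matrix.posSemidef_conjTranspose_mul_self C).eigenvalues_nonneg
  set g : Fin n → ℝ := fun i => if hC.eigenvalues i = 0 then 0
      else (Real.sqrt (hC.eigenvalues i))⁻¹ with hg
  have hWdef : nnWitness C = C * (U * diagonal g * star U) := rfl
  have hDstar : (U * diagonal g * star U)ᴴ = U * diagonal g * star U := by
    simp [Matrix.conjTranspose_mul, Matrix.star_eq_conjTranspose,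
      Matrix.diagonal_conjTranspose, Matrix.mul_assoc]
  constructor
  · have h1 : (nnWitness C)ᴴ * C = U * diagonal g * (star U * (Cᴴ * C)) := by
      rw [hWdef, Matrix.conjTranspose_mul, hDstar]
      simp only [Matrix.mul_assoc]
    have h2 : ((nnWitness C)ᴴ * C).trace = (diagonal g * (star U * (Cᴴ * C) * U)).trace := by
      rw [h1, Matrix.trace_mul_cycle, Matrix.trace_mul_comm, Matrix.mul_assoc]
    rw [h2, hdiag, Matrix.diagonal_mul_diagonal, Matrix.trace_diagonal]
    unfold nuclearNorm
    apply Finset.sum_congr rfl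
    intro i _
    by_cases h : hC.eigenvalues i = 0
    · simp [hg]
      split_ifs with h''
      · rw [h'', Real.sqrt_zero]
      · exact absurd h h''
    · have hpos : 0 < hC.eigenvalues i := lt_of_le_of_ne (hnonneg i) (Ne.symm h)
      have hspos : 0 < Real.sqrt (hC.eigenvalues i) := Real.sqrt_pos.mpr hpos
      have hs : Real.sqrt (hC.eigenvalues i) * Real.sqrt (hC.eigenvalues i)
          = hC.eigenvalues i := Real.mul_self_sqrt (hnonneg i)
      simp only [hg, if_neg h]
      calc (Real.sqrt (hC.eigenvalues i))⁻¹ * hC.eigenvalues i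
          = (Real.sqrt (hC.eigenvalues i))⁻¹
              * (Real.sqrt (hC.eigenvalues i) * Real.sqrt (hC.eigenvalues i)) := by rw [hs]
        _ = Real.sqrt (hC.eigenvalues i) := by
            rw [← mul_assoc, inv_mul_cancel₀ (ne_of_gt hspos), one_mul]
  · intro x
    set e : Fin n → ℝ := fun i => g i * hC.eigenvalues i * g i with he'
    have hWW : (nnWitness C)ᴴ * nnWitness C = U * diagonal e * star U := by
      rw [hWdef, Matrix.conjTranspose_mul, hDstar]
      calc U * diagonal g * star U * Cᴴ * (C * (U * diagonal g * star U))
          = U * (diagonal g * (star U * (Cᴴ * C) * U) * (diagonal g * star U)) := by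
            simp only [Matrix.mul_assoc]
        _ = U * (diagonal g * diagonal hC.eigenvalues * diagonal g * star U) := by
            rw [hdiag]; simp only [Matrix.mul_assoc]
        _ = U * diagonal e * star U := by
            rw [Matrix.diagonal_mul_diagonal, Matrix.diagonal_mul_diagonal]
            simp only [Matrix.mul_assoc, he']
    have he : ∀ i, e i ≤ 1 := by
      intro i
      by_cases h : hC.eigenvalues i = 0
      · simp [he', hg]
        split_ifs with h1
        · norm_num
        · exact absurd h h1
      · have hpos : 0 < hC.eigenvalues i := lt_of_le_of_ne (hnonneg i) (Ne.symm h)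
        have hspos : 0 < Real.sqrt (hC.eigenvalues i) := Real.sqrt_pos.mpr hpos
        have hs : Real.sqrt (hC.eigenvalues i) * Real.sqrt (hC.eigenvalues i)
            = hC.eigenvalues i := Real.mul_self_sqrt (hnonneg i)
        apply le_of_eq
        simp only [he', hg, if_neg h]
        rw [← hs]
        field_simp
        rw [Real.sqrt_sq hspos.le]
    rw [dot_mulVec_self, hWW]
    have hxU : x ᵥ* U = star U *ᵥ x := by
      rw [← vecMul_conjTranspose_eq (star U) x, Matrix.star_eq_conjTranspose,
        Matrix.conjTranspose_conjTranspose]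
    have step1 : x ⬝ᵥ ((U * diagonal e * star U) *ᵥ x)
        = (star U *ᵥ x) ⬝ᵥ (diagonal e *ᵥ (star U *ᵥ x)) := by
      calc x ⬝ᵥ ((U * diagonal e * star U) *ᵥ x)
          = x ⬝ᵥ (U *ᵥ ((diagonal e * star U) *ᵥ x)) := by
            rw [Matrix.mulVec_mulVec, Matrix.mul_assoc]
        _ = (x ᵥ* U) ⬝ᵥ ((diagonal e * star U) *ᵥ x) := Matrix.dotProduct_mulVec _ _ _
        _ = (star U *ᵥ x) ⬝ᵥ (diagonal e *ᵥ (star U *ᵥ x)) := by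
            rw [hxU, ← Matrix.mulVec_mulVec]
    rw [step1]
    set y := star U *ᵥ x with hy
    have step2 : y ⬝ᵥ (diagonal e *ᵥ y) ≤ y ⬝ᵥ y := by
      simp only [dotProduct, Matrix.mulVec_diagonal]
      apply Finset.sum_le_sum
      intro i _
      calc y i * (e i * y i) = e i * (y i * y i) := by ring
        _ ≤ 1 * (y i * y i) := mul_le_mul_of_nonneg_right (he i) (mul_self_nonneg _)
        _ = y i * y i := one_mul _
    have step3 : y ⬝ᵥ y = x ⬝ᵥ x := by
      rw [hy, dot_mulVec_self]
      rw [Matrix.star_eq_conjTranspose, Matrix.conjTranspose_conjTranspose,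
        ← Matrix.star_eq_conjTranspose, hUsU, Matrix.one_mulVec]
    rw [← step3]
    exact step2

/-- Triangle inequality for the nuclear norm. -/
lemma nuclearNorm_triangle {m n : ℕ} (A B : Matrix (Fin m) (Fin n) ℝ) :
    nuclearNorm (A + B) ≤ nuclearNorm A + nuclearNorm B := by
  obtain ⟨htr, hcon⟩ := nnWitness_spec (A + B)
  calc nuclearNorm (A + B) = ((nnWitness (A + B))ᴴ * (A + B)).trace := htr.symm
    _ = ((nnWitness (A + B))ᴴ * A).trace + ((nnWitness (A + B))ᴴ * B).trace := by
        rw [Matrix.mul_add, Matrix.trace_add]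
    _ ≤ nuclearNorm A + nuclearNorm B :=
        add_le_add (trace_le_nuclearNorm A _ hcon) (trace_le_nuclearNorm B _ hcon)

/-- Triangle-type inequality for the error decomposition: with `Θ₀ = U₁ S V₁ᵀ` and the
projections `P_{M̄⊥}Δ = (I − U₁U₁ᵀ) Δ (I − V₁V₁ᵀ)`, `P_{M̄}Δ = Δ − P_{M̄⊥}Δ`, one has
`‖Θ₀ + Δ‖_nu ≥ ‖Θ₀‖_nu + ‖P_{M̄⊥}Δ‖_nu − ‖P_{M̄}Δ‖_nu`. -/
theorem nuclearNorm_add_ge_decomposition (d₁ d₂ r : ℕ)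
    (U₁ : Matrix (Fin d₁) (Fin r) ℝ) (V₁ : Matrix (Fin d₂) (Fin r) ℝ)
    (hU₁ : U₁ᵀ * U₁ = 1) (hV₁ : V₁ᵀ * V₁ = 1)
    (S : Matrix (Fin r) (Fin r) ℝ)
    (Θ₀ Δ : Matrix (Fin d₁) (Fin d₂) ℝ)
    (hΘ₀ : Θ₀ = U₁ * S * V₁ᵀ) :
    nuclearNorm Θ₀ + nuclearNorm ((1 - U₁ * U₁ᵀ) * Δ * (1 - V₁ * V₁ᵀ)) -
        nuclearNorm (Δ - (1 - U₁ * U₁ᵀ) * Δ * (1 - V₁ * V₁ᵀ)) ≤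
      nuclearNorm (Θ₀ + Δ) := by
  set Y : Matrix (Fin d₁) (Fin d₂) ℝ := (1 - U₁ * U₁ᵀ) * Δ * (1 - V₁ * V₁ᵀ) with hY
  have keyU : U₁ᵀ * (1 - U₁ * U₁ᵀ) = 0 := by
    rw [Matrix.mul_sub, Matrix.mul_one, ← Matrix.mul_assoc, hU₁, Matrix.one_mul, sub_self]
  have keyV : V₁ᵀ * (1 - V₁ * V₁ᵀ) = 0 := by
    rw [Matrix.mul_sub, Matrix.mul_one, ← Matrix.mul_assoc, hV₁, Matrix.one_mul, sub_self]
  have h1 : Θ₀ᴴ * Y = 0 := by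
    rw [Matrix.conjTranspose_eq_transpose_of_trivial, hΘ₀, hY]
    calc (U₁ * S * V₁ᵀ)ᵀ * ((1 - U₁ * U₁ᵀ) * Δ * (1 - V₁ * V₁ᵀ))
        = V₁ * Sᵀ * (U₁ᵀ * (1 - U₁ * U₁ᵀ)) * (Δ * (1 - V₁ * V₁ᵀ)) := by
          rw [Matrix.transpose_mul, Matrix.transpose_mul, Matrix.transpose_transpose]
          simp only [Matrix.mul_assoc]
      _ = 0 := by rw [keyU, Matrix.mul_zero, Matrix.zero_mul]
  have h2 : Θ₀ * Yᴴ = 0 := by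
    rw [Matrix.conjTranspose_eq_transpose_of_trivial, hΘ₀, hY]
    have hYt : ((1 - U₁ * U₁ᵀ) * Δ * (1 - V₁ * V₁ᵀ))ᵀ
        = (1 - V₁ * V₁ᵀ) * Δᵀ * (1 - U₁ * U₁ᵀ) := by
      rw [Matrix.transpose_mul, Matrix.transpose_mul]
      rw [Matrix.transpose_sub, Matrix.transpose_one, Matrix.transpose_mul,
        Matrix.transpose_transpose]
      rw [Matrix.transpose_sub, Matrix.transpose_one, Matrix.transpose_mul,
        Matrix.transpose_transpose]
      simp only [Matrix.mul_assoc]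
    rw [hYt]
    calc U₁ * S * V₁ᵀ * ((1 - V₁ * V₁ᵀ) * Δᵀ * (1 - U₁ * U₁ᵀ))
        = U₁ * S * (V₁ᵀ * (1 - V₁ * V₁ᵀ)) * (Δᵀ * (1 - U₁ * U₁ᵀ)) := by
          simp only [Matrix.mul_assoc]
      _ = 0 := by rw [keyV, Matrix.mul_zero, Matrix.zero_mul]
  have hdec : nuclearNorm (Θ₀ + Y) = nuclearNorm Θ₀ + nuclearNorm Y :=
    nuclearNorm_add_eq h1 h2
  have htri : nuclearNorm (Θ₀ + Y) ≤ nuclearNorm (Θ₀ + Δ) + nuclearNorm (Δ - Y) := by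
    have h := nuclearNorm_triangle (Θ₀ + Δ) (-(Δ - Y))
    have heq : Θ₀ + Δ + -(Δ - Y) = Θ₀ + Y := by abel
    rw [heq, nuclearNorm_neg] at h
    exact h
  linarith
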